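/- Define s(h) = 4h³/27 − (2/3)^{4/3}·h^{5/3}·r for a fixed r ∈ ℝ and define h(s) = 2^{−2/3}·3·s^{1/3} + 2^{−4/9}·3^{1/3}·s^{−1/9}·r. Then h(s(h)) = h + O(h^{−5/3}) as h → ∞, i.e. there exist C, h_0 > 0 with |h(s(h)) − h| ≤ C·h^{−5/3} for all h ≥ h_0. -/

import Mathlib

open Real

lemma pow3_inj' {a b : ℝ} (ha : 0 ≤ a) (hb : 0 ≤ b) (h : a^3 = b^3) : a = b :=
  le_antisymm (le_of_pow_le_pow_left₀ (by norm_num) hb h.le)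
    (le_of_pow_le_pow_left₀ (by norm_num) ha h.ge)

lemma pow9_inj' {a b : ℝ} (ha : 0 ≤ a) (hb : 0 ≤ b) (h : a^9 = b^9) : a = b :=
  le_antisymm (le_of_pow_le_pow_left₀ (by norm_num) hb h.le)
    (le_of_pow_le_pow_left₀ (by norm_num) ha h.ge)

lemma rpow_npow' (x : ℝ) (hx : 0 ≤ x) (p : ℝ) (n : ℕ) : (x^p)^n = x^(p * n) := by
  rw [← Real.rpow_natCast (x^p) n, ← Real.rpow_mul hx]

lemma const1 : (2:ℝ)^(-(2:ℝ)/3) * 3 * ((4:ℝ)/27)^((1:ℝ)/3) = 1 := by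
  apply pow3_inj' (by positivity) (by norm_num)
  rw [mul_pow, mul_pow, rpow_npow' 2 (by norm_num), rpow_npow' (4/27) (by norm_num)]
  rw [show (-(2:ℝ)/3 * ((3:ℕ):ℝ)) = ((-2:ℤ):ℝ) by push_cast; ring, Real.rpow_intCast]
  rw [show ((1:ℝ)/3 * ((3:ℕ):ℝ)) = ((1:ℤ):ℝ) by push_cast; ring, Real.rpow_intCast]
  norm_num

lemma const2 : (2:ℝ)^(-(4:ℝ)/9) * (3:ℝ)^((1:ℝ)/3) * ((4:ℝ)/27)^(-(1:ℝ)/9) = ((3:ℝ)/2)^((2:ℝ)/3) := by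
  apply pow9_inj' (by positivity) (by positivity)
  rw [mul_pow, mul_pow, rpow_npow' 2 (by norm_num), rpow_npow' 3 (by norm_num),
    rpow_npow' (4/27) (by norm_num), rpow_npow' (3/2) (by norm_num)]
  rw [show (-(4:ℝ)/9 * ((9:ℕ):ℝ)) = ((-4:ℤ):ℝ) by push_cast; ring, Real.rpow_intCast]
  rw [show ((1:ℝ)/3 * ((9:ℕ):ℝ)) = ((3:ℤ):ℝ) by push_cast; ring, Real.rpow_intCast]
  rw [show (-(1:ℝ)/9 * ((9:ℕ):ℝ)) = ((-1:ℤ):ℝ) by push_cast; ring, Real.rpow_intCast]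
  rw [show ((2:ℝ)/3 * ((9:ℕ):ℝ)) = ((6:ℤ):ℝ) by push_cast; ring, Real.rpow_intCast]
  norm_num

lemma const5 : (4:ℝ)/27 * (3 * ((3:ℝ)/2)^((2:ℝ)/3)) = ((2:ℝ)/3)^((4:ℝ)/3) := by
  apply pow3_inj' (by positivity) (by positivity)
  rw [mul_pow, mul_pow, rpow_npow' (3/2) (by norm_num), rpow_npow' (2/3) (by norm_num)]
  rw [show ((2:ℝ)/3 * ((3:ℕ):ℝ)) = ((2:ℤ):ℝ) by push_cast; ring, Real.rpow_intCast]
  rw [show ((4:ℝ)/3 * ((3:ℕ):ℝ)) = ((4:ℤ):ℝ) by push_cast; ring, Real.rpow_intCast]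
  norm_num

lemma cube_close (x : ℝ) (hx : |x| ≤ 1/2) :
    |(1-x)^((1:ℝ)/3) - (1 - x/3)| ≤ x^2 := by
  obtain ⟨hx2, hx1⟩ := abs_le.1 hx
  have h1 : (0:ℝ) ≤ 1 - x := by linarith
  set a := (1-x)^((1:ℝ)/3) with ha
  have ha0 : 0 ≤ a := Real.rpow_nonneg h1 _
  have ha3 : a^3 = 1 - x := by
    rw [ha, ← Real.rpow_natCast ((1-x)^((1:ℝ)/3)) 3, ← Real.rpow_mul h1]
    norm_num
  have haL : (0.7:ℝ) ≤ a := by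
    apply le_of_pow_le_pow_left₀ (n := 3) (by norm_num) ha0
    rw [ha3]; norm_num; linarith
  have hD : (1:ℝ) ≤ a^2 + a*(1 - x/3) + (1 - x/3)^2 := by nlinarith
  have hD0 : (0:ℝ) ≤ a^2 + a*(1 - x/3) + (1 - x/3)^2 := by linarith
  have hnum : (a - (1 - x/3)) * (a^2 + a*(1-x/3) + (1-x/3)^2) = -x^2/3 + x^3/27 := by
    have h2 : a^3 - (1-x/3)^3 = -x^2/3 + x^3/27 := by rw [ha3]; ring
    linear_combination h2
  have h3 : |(-x^2/3 + x^3/27)| ≤ x^2 := by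
    rw [abs_le]
    constructor <;> nlinarith [sq_nonneg x, mul_nonneg (sq_nonneg x) (by linarith : (0:ℝ) ≤ x + 1/2),
      mul_nonneg (sq_nonneg x) (by linarith : (0:ℝ) ≤ 1/2 - x)]
  calc |a - (1 - x/3)| ≤ |a - (1 - x/3)| * (a^2 + a*(1 - x/3) + (1 - x/3)^2) :=
        le_mul_of_one_le_right (abs_nonneg _) hD
    _ = |(a - (1 - x/3)) * (a^2 + a*(1-x/3) + (1-x/3)^2)| := by
        rw [abs_mul, abs_of_nonneg hD0]
    _ ≤ x^2 := by rw [hnum]; exact h3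

lemma ninth_close (x : ℝ) (hx : |x| ≤ 1/2) :
    |(1-x)^(-(1:ℝ)/9) - 1| ≤ |x| := by
  obtain ⟨hx2, hx1⟩ := abs_le.1 hx
  have h1 : (0:ℝ) < 1 - x := by linarith
  set b := (1-x)^(-(1:ℝ)/9) with hb
  have hb0 : 0 < b := Real.rpow_pos_of_pos h1 _
  have hb9 : b^9 = (1-x)⁻¹ := by
    rw [hb, ← Real.rpow_natCast ((1-x)^(-(1:ℝ)/9)) 9, ← Real.rpow_mul h1.le]
    rw [show (-(1:ℝ)/9 * ((9:ℕ):ℝ)) = -1 by push_cast; ring, Real.rpow_neg_one]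
  have hbL : (0.9:ℝ) ≤ b := by
    apply le_of_pow_le_pow_left₀ (n := 9) (by norm_num) hb0.le
    rw [hb9]
    have h23 : (2:ℝ)/3 ≤ (1-x)⁻¹ := by
      rw [show ((2:ℝ)/3) = (3/2:ℝ)⁻¹ by norm_num]
      exact inv_anti₀ h1 (by linarith)
    nlinarith
  set S := 1 + b + b^2 + b^3 + b^4 + b^5 + b^6 + b^7 + b^8 with hSdef
  have hS : (2:ℝ) ≤ S := by
    have p3 : (0:ℝ) ≤ b^3 := by positivity
    have p4 : (0:ℝ) ≤ b^4 := by positivity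
    have p5 : (0:ℝ) ≤ b^5 := by positivity
    have p6 : (0:ℝ) ≤ b^6 := by positivity
    have p7 : (0:ℝ) ≤ b^7 := by positivity
    have p8 : (0:ℝ) ≤ b^8 := by positivity
    nlinarith [sq_nonneg (b - 0.9)]
  have hgeo : (b - 1) * S = b^9 - 1 := by rw [hSdef]; ring
  have hnum : |b^9 - 1| ≤ 2*|x| := by
    rw [hb9, show (1-x)⁻¹ - 1 = x / (1-x) by field_simp; ring]
    rw [abs_div, abs_of_pos h1]
    calc |x| / (1-x) ≤ |x| / (1/2) := by
          apply div_le_div_of_nonneg_left (abs_nonneg x) (by norm_num) (by linarith)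
      _ = 2*|x| := by ring
  have key : 2*|b-1| ≤ 2*|x| := by
    calc 2*|b-1| ≤ |b-1| * S := by nlinarith [abs_nonneg (b-1)]
      _ = |(b-1)*S| := by rw [abs_mul, abs_of_nonneg (by linarith : (0:ℝ) ≤ S)]
      _ = |b^9 - 1| := by rw [hgeo]
      _ ≤ 2*|x| := hnum
  linarith



set_option maxHeartbeats 1000000 in
theorem stmt15 (r : ℝ) :
    ∃ C > 0, ∃ h0 > 0, ∀ h ≥ h0,
      |(2:ℝ)^(-(2:ℝ)/3) * 3 * (4*h^3/27 - (2/3:ℝ)^((4:ℝ)/3) * h^((5:ℝ)/3) * r)^((1:ℝ)/3)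
        + (2:ℝ)^(-(4:ℝ)/9) * (3:ℝ)^((1:ℝ)/3)
            * (4*h^3/27 - (2/3:ℝ)^((4:ℝ)/3) * h^((5:ℝ)/3) * r)^(-(1:ℝ)/9) * r
        - h| ≤ C * h^(-(5:ℝ)/3) := by
  set M : ℝ := ((3:ℝ)/2)^((2:ℝ)/3) with hM
  have hM0 : 0 < M := Real.rpow_pos_of_pos (by norm_num) _
  set K : ℝ := 3 * M with hK
  have hK0 : 0 < K := by positivity
  refine ⟨K^2*r^2 + M*K*r^2 + 1, by positivity, max 1 (2*K*|r| + 1), by positivity, ?_⟩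
  intro h hh
  have hh1 : (1:ℝ) ≤ h := le_trans (le_max_left _ _) hh
  have hKr : 2*K*|r| + 1 ≤ h := le_trans (le_max_right _ _) hh
  have hpos : (0:ℝ) < h := by linarith
  set ε : ℝ := K * r * h^(-(4:ℝ)/3) with hε
  -- |ε| ≤ 1/2
  have hrp : (0:ℝ) < h^(-(4:ℝ)/3) := Real.rpow_pos_of_pos hpos _
  have hεabs : |ε| ≤ 1/2 := by
    have e1 : |ε| = K * |r| * h^(-(4:ℝ)/3) := by
      rw [hε, abs_mul, abs_mul, abs_of_pos hK0, abs_of_pos hrp]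
    have e2 : h^(-(4:ℝ)/3) ≤ h⁻¹ := by
      have := Real.rpow_le_rpow_of_exponent_le hh1 (by norm_num : -(4:ℝ)/3 ≤ -1)
      rwa [Real.rpow_neg_one] at this
    have e3 : K * |r| * h^(-(4:ℝ)/3) ≤ K * |r| * h⁻¹ :=
      mul_le_mul_of_nonneg_left e2 (by positivity)
    have e4 : K * |r| * h⁻¹ ≤ 1/2 := by
      rw [← div_eq_mul_inv, div_le_iff₀ hpos]
      nlinarith [abs_nonneg r]
    linarith [e1 ▸ (le_trans e3 e4)]
  have h1e : (0:ℝ) < 1 - ε := by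
    have := (abs_le.1 hεabs).2; linarith
  -- rpow arithmetic on h
  have hm1 : h^3 * h^(-(4:ℝ)/3) = h^((5:ℝ)/3) := by
    rw [← Real.rpow_natCast h 3, ← Real.rpow_add hpos]; norm_num
  have hm2 : h * h^(-(4:ℝ)/3) = h^(-(1:ℝ)/3) := by
    nth_rewrite 1 [← Real.rpow_one h]
    rw [← Real.rpow_add hpos]; norm_num
  have hm3 : ((h^3 : ℝ))^((1:ℝ)/3) = h := by
    rw [← Real.rpow_natCast h 3, ← Real.rpow_mul hpos.le]; norm_num
  have hm4 : ((h^3 : ℝ))^(-(1:ℝ)/9) = h^(-(1:ℝ)/3) := by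
    rw [← Real.rpow_natCast h 3, ← Real.rpow_mul hpos.le]; norm_num
  have hm5 : (h^(-(4:ℝ)/3))^2 = h^(-(8:ℝ)/3) := by
    rw [rpow_npow' h hpos.le]; norm_num
  have hm6 : h * h^(-(8:ℝ)/3) = h^(-(5:ℝ)/3) := by
    nth_rewrite 1 [← Real.rpow_one h]
    rw [← Real.rpow_add hpos]; norm_num
  have hm7 : h^(-(1:ℝ)/3) * h^(-(4:ℝ)/3) = h^(-(5:ℝ)/3) := by
    rw [← Real.rpow_add hpos]; norm_num
  -- rewrite s
  have hs : 4*h^3/27 - (2/3:ℝ)^((4:ℝ)/3) * h^((5:ℝ)/3) * r = 4/27*h^3*(1-ε) := by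
    rw [← const5, ← hm1, hε, hK]; ring
  rw [hs]
  have hhn : (0:ℝ) ≤ (4:ℝ)/27*h^3 := by positivity
  have e13 : ((4:ℝ)/27*h^3*(1-ε))^((1:ℝ)/3)
      = ((4:ℝ)/27)^((1:ℝ)/3) * h * (1-ε)^((1:ℝ)/3) := by
    rw [Real.mul_rpow hhn h1e.le, Real.mul_rpow (by norm_num) (by positivity), hm3]
  have e19 : ((4:ℝ)/27*h^3*(1-ε))^(-(1:ℝ)/9)
      = ((4:ℝ)/27)^(-(1:ℝ)/9) * h^(-(1:ℝ)/3) * (1-ε)^(-(1:ℝ)/9) := by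
    rw [Real.mul_rpow hhn h1e.le, Real.mul_rpow (by norm_num) (by positivity), hm4]
  rw [e13, e19]
  set A : ℝ := (1-ε)^((1:ℝ)/3) with hA
  set B : ℝ := (1-ε)^(-(1:ℝ)/9) with hB
  have hε3 : h*ε/3 = M*r*h^(-(1:ℝ)/3) := by
    rw [hε, hK]; linear_combination (M*r) * hm2
  have key : (2:ℝ)^(-(2:ℝ)/3) * 3 * (((4:ℝ)/27)^((1:ℝ)/3) * h * A)
      + (2:ℝ)^(-(4:ℝ)/9) * (3:ℝ)^((1:ℝ)/3) * (((4:ℝ)/27)^(-(1:ℝ)/9) * h^(-(1:ℝ)/3) * B) * r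
      - h = h*(A - (1 - ε/3)) + M*r*h^(-(1:ℝ)/3)*(B-1) := by
    linear_combination (h*A) * const1 + (h^(-(1:ℝ)/3)*B*r) * const2 + hε3 - 2*(M*r)*hm2
  rw [key]
  -- bounds
  have hcb := cube_close ε hεabs
  have hnb := ninth_close ε hεabs
  have hr13 : (0:ℝ) < h^(-(1:ℝ)/3) := Real.rpow_pos_of_pos hpos _
  have hr53 : (0:ℝ) < h^(-(5:ℝ)/3) := Real.rpow_pos_of_pos hpos _
  have hεsq : ε^2 = K^2*r^2 * h^(-(8:ℝ)/3) := by
    rw [hε, ← hm5]; ring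
  have b1 : |h*(A - (1 - ε/3))| ≤ K^2*r^2 * h^(-(5:ℝ)/3) := by
    rw [abs_mul, abs_of_pos hpos]
    calc h * |A - (1 - ε/3)| ≤ h * ε^2 := mul_le_mul_of_nonneg_left hcb hpos.le
      _ = K^2*r^2 * (h * h^(-(8:ℝ)/3)) := by rw [hεsq]; ring
      _ = K^2*r^2 * h^(-(5:ℝ)/3) := by rw [hm6]
  have b2 : |M*r*h^(-(1:ℝ)/3)*(B-1)| ≤ M*K*r^2 * h^(-(5:ℝ)/3) := by
    rw [abs_mul, abs_mul, abs_mul, abs_of_pos hM0, abs_of_pos hr13]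
    have e1 : |ε| = K * |r| * h^(-(4:ℝ)/3) := by
      rw [hε, abs_mul, abs_mul, abs_of_pos hK0, abs_of_pos hrp]
    calc M * |r| * h^(-(1:ℝ)/3) * |B-1| ≤ M * |r| * h^(-(1:ℝ)/3) * |ε| := by
          apply mul_le_mul_of_nonneg_left hnb (by positivity)
      _ = M*K*(|r| * |r|) * (h^(-(1:ℝ)/3) * h^(-(4:ℝ)/3)) := by rw [e1]; ring
      _ = M*K*r^2 * h^(-(5:ℝ)/3) := by rw [hm7, abs_mul_abs_self]; ring
  calc |h * (A - (1 - ε/3)) + M * r * h^(-(1:ℝ)/3) * (B-1)|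
      ≤ |h * (A - (1 - ε/3))| + |M * r * h^(-(1:ℝ)/3) * (B-1)| := abs_add_le _ _
    _ ≤ K^2*r^2 * h^(-(5:ℝ)/3) + M*K*r^2 * h^(-(5:ℝ)/3) := by linarith
    _ ≤ (K^2*r^2 + M*K*r^2 + 1) * h^(-(5:ℝ)/3) := by nlinarith [hr53.le]
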